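/- (Final step of Theorem 3.3, p = 2) Let T be any mn×mn complex matrix and suppose there exist an mn×n matrix M and an n×mn matrix N such that A_2 T − T A_2^* = i·(M·M_{22} + M_{32}·N), where M_{22} is the n×mn block matrix {ℳ^{(p−q)}}_{p,q=1}^n with 1×m blocks ℳ^{(0)} = 𝟏_m^* and ℳ^{(r)} = 0 for r ≠ 0, and M_{32} = M_{22}^*. Then, partitioning T = {T_{pq}}_{p,q=1}^n into m×m blocks, every block T_{pq} is a Toeplitz matrix (its (j,ℓ) entry depends only on j − ℓ). -/

import Mathlib

open Matrix

noncomputable section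

/-- The scalar sequence `a_r`: `0` for `r < 0`, `i/2` for `r = 0`, `i` for `r > 0`. -/
def aC (r : ℤ) : ℂ := if r < 0 then 0 else if r = 0 then Complex.I / 2 else Complex.I

/-- `A_1`: block matrix `{𝒜_{1,p−q}}` with blocks `0`, `(i/2)I_m`, `i·I_m`. -/
def A1 (m n : ℕ) : Matrix (Fin n × Fin m) (Fin n × Fin m) ℂ :=
  Matrix.of fun r c => if r.2 = c.2 then aC (((r.1 : ℕ) : ℤ) - ((c.1 : ℕ) : ℤ)) else 0

/-- `A_2 = diag{𝒜_{2,0}, …, 𝒜_{2,0}}`. -/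
def A2 (m n : ℕ) : Matrix (Fin n × Fin m) (Fin n × Fin m) ℂ :=
  Matrix.of fun r c => if r.1 = c.1 then aC (((r.2 : ℕ) : ℤ) - ((c.2 : ℕ) : ℤ)) else 0

/-- `𝒜_1 = {a_{j−ℓ}}_{j,ℓ=1}^n`. -/
def calA1 (n : ℕ) : Matrix (Fin n) (Fin n) ℂ :=
  Matrix.of fun p q => aC (((p : ℕ) : ℤ) - ((q : ℕ) : ℤ))

/-- `𝒜_2 = {a_{j−ℓ}}_{j,ℓ=1}^m`. -/
def calA2 (m : ℕ) : Matrix (Fin m) (Fin m) ℂ :=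
  Matrix.of fun j l => aC (((j : ℕ) : ℤ) - ((l : ℕ) : ℤ))

/-- The Toeplitz-block Toeplitz matrix `T`, entry `t_{p−q}^{(j−ℓ)}`. -/
def TBT (m n : ℕ) (t : ℤ → ℤ → ℂ) : Matrix (Fin n × Fin m) (Fin n × Fin m) ℂ :=
  Matrix.of fun r c =>
    t (((r.1 : ℕ) : ℤ) - ((c.1 : ℕ) : ℤ)) (((r.2 : ℕ) : ℤ) - ((c.2 : ℕ) : ℤ))

/-- `M_{11}`: block column, `p`-th block `(1/2)𝒯_0 + Σ_{s=1}^{p−1} 𝒯_s`. -/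
def M11 (m n : ℕ) (t : ℤ → ℤ → ℂ) : Matrix (Fin n × Fin m) (Fin m) ℂ :=
  Matrix.of fun r l => (1 / 2 : ℂ) * t 0 (((r.2 : ℕ) : ℤ) - ((l : ℕ) : ℤ))
    + ∑ s ∈ Finset.range (r.1 : ℕ), t ((s : ℤ) + 1) (((r.2 : ℕ) : ℤ) - ((l : ℕ) : ℤ))

/-- `M_{21} = [I_m I_m … I_m]`. -/
def M21 (m n : ℕ) : Matrix (Fin m) (Fin n × Fin m) ℂ :=
  Matrix.of fun j c => if j = c.2 then 1 else 0

/-- `M_{31} = M_{21}^*`. -/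
def M31 (m n : ℕ) : Matrix (Fin n × Fin m) (Fin m) ℂ := (M21 m n)ᴴ

/-- `M_{41}`: block row, `q`-th block `(1/2)𝒯_0 + Σ_{s=1}^{q−1} 𝒯_{−s}`. -/
def M41 (m n : ℕ) (t : ℤ → ℤ → ℂ) : Matrix (Fin m) (Fin n × Fin m) ℂ :=
  Matrix.of fun j c => (1 / 2 : ℂ) * t 0 (((j : ℕ) : ℤ) - ((c.2 : ℕ) : ℤ))
    + ∑ s ∈ Finset.range (c.1 : ℕ), t (-((s : ℤ) + 1)) (((j : ℕ) : ℤ) - ((c.2 : ℕ) : ℤ))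

/-- `j`-th entry of the column `ℳ_{12}^{(r)}`. -/
def m12e (m : ℕ) (t : ℤ → ℤ → ℂ) (r : ℤ) (j : Fin m) : ℂ :=
  (1 / 2 : ℂ) * t r 0 + ∑ s ∈ Finset.range (j : ℕ), t r ((s : ℤ) + 1)

/-- `ℓ`-th entry of the row `ℳ_{42}^{(r)}`. -/
def m42e (m : ℕ) (t : ℤ → ℤ → ℂ) (r : ℤ) (l : Fin m) : ℂ :=
  (1 / 2 : ℂ) * t r 0 + ∑ s ∈ Finset.range (l : ℕ), t r (-((s : ℤ) + 1))

/-- `M_{12} = {ℳ_{12}^{(p−q)}}`. -/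
def M12 (m n : ℕ) (t : ℤ → ℤ → ℂ) : Matrix (Fin n × Fin m) (Fin n) ℂ :=
  Matrix.of fun r q => m12e m t (((r.1 : ℕ) : ℤ) - ((q : ℕ) : ℤ)) r.2

/-- `M_{22}`. -/
def M22 (m n : ℕ) : Matrix (Fin n) (Fin n × Fin m) ℂ :=
  Matrix.of fun p c => if p = c.1 then 1 else 0

/-- `M_{32} = M_{22}^*`. -/
def M32 (m n : ℕ) : Matrix (Fin n × Fin m) (Fin n) ℂ := (M22 m n)ᴴ

/-- `M_{42} = {ℳ_{42}^{(p−q)}}`. -/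
def M42 (m n : ℕ) (t : ℤ → ℤ → ℂ) : Matrix (Fin n) (Fin n × Fin m) ℂ :=
  Matrix.of fun p c => m42e m t (((p : ℕ) : ℤ) - ((c.1 : ℕ) : ℤ)) c.2

/-- `K`: the `1×mn` row, `q`-th block `(1/2)ℳ_{42}^{(0)} + Σ_{s=1}^{q−1} ℳ_{42}^{(−s)}`. -/
def Krow (m n : ℕ) (t : ℤ → ℤ → ℂ) : (Fin n × Fin m) → ℂ :=
  fun c => (1 / 2 : ℂ) * m42e m t 0 c.2
    + ∑ s ∈ Finset.range (c.1 : ℕ), m42e m t (-((s : ℤ) + 1)) c.2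

/-- `K_{11}`: `p`-th row `(1/2)ℳ_{42}^{(0)} + Σ_{s=1}^{p−1} ℳ_{42}^{(s)}`. -/
def K11 (m n : ℕ) (t : ℤ → ℤ → ℂ) : Matrix (Fin n) (Fin m) ℂ :=
  Matrix.of fun p l => (1 / 2 : ℂ) * m42e m t 0 l
    + ∑ s ∈ Finset.range (p : ℕ), m42e m t ((s : ℤ) + 1) l

/-- `K_{12}`: `q`-th column `(1/2)ℳ_{12}^{(0)} + Σ_{s=1}^{q−1} ℳ_{12}^{(−s)}`. -/
def K12 (m n : ℕ) (t : ℤ → ℤ → ℂ) : Matrix (Fin m) (Fin n) ℂ :=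
  Matrix.of fun j q => (1 / 2 : ℂ) * m12e m t 0 j
    + ∑ s ∈ Finset.range (q : ℕ), m12e m t (-((s : ℤ) + 1)) j

/-- `Π_1 = [M_{11} M_{31}]`. -/
def Pi1 (m n : ℕ) (t : ℤ → ℤ → ℂ) : Matrix (Fin n × Fin m) (Fin m ⊕ Fin m) ℂ :=
  fromCols (M11 m n t) (M31 m n)

/-- `Π_2 = [M_{12} M_{32}]`. -/
def Pi2 (m n : ℕ) (t : ℤ → ℤ → ℂ) : Matrix (Fin n × Fin m) (Fin n ⊕ Fin n) ℂ :=
  fromCols (M12 m n t) (M32 m n)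

/-- `Π̂_1 = col[M_{21}; M_{41}]`. -/
def PiHat1 (m n : ℕ) (t : ℤ → ℤ → ℂ) : Matrix (Fin m ⊕ Fin m) (Fin n × Fin m) ℂ :=
  fromRows (M21 m n) (M41 m n t)

/-- `Π̂_2 = col[M_{22}; M_{42}]`. -/
def PiHat2 (m n : ℕ) (t : ℤ → ℤ → ℂ) : Matrix (Fin n ⊕ Fin n) (Fin n × Fin m) ℂ :=
  fromRows (M22 m n) (M42 m n t)

/-- All-ones vector. -/
def onesV (k : Type*) : k → ℂ := fun _ => 1

/-- `g_{12} = i·Π̂_1 T^{-1} Π_2 − i·[[𝟏_m 𝟏_n^*, 0],[K_{12}, 0]]`. -/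
def g12M (m n : ℕ) (t : ℤ → ℤ → ℂ) : Matrix (Fin m ⊕ Fin m) (Fin n ⊕ Fin n) ℂ :=
  Complex.I • (PiHat1 m n t * (TBT m n t)⁻¹ * Pi2 m n t)
    - Complex.I • fromBlocks (vecMulVec (onesV (Fin m)) (onesV (Fin n))) 0 (K12 m n t) 0

/-- `g_{21} = i·Π̂_2 T^{-1} Π_1 − i·[[𝟏_n 𝟏_m^*, 0],[K_{11}, 0]]`. -/
def g21M (m n : ℕ) (t : ℤ → ℤ → ℂ) : Matrix (Fin n ⊕ Fin n) (Fin m ⊕ Fin m) ℂ :=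
  Complex.I • (PiHat2 m n t * (TBT m n t)⁻¹ * Pi1 m n t)
    - Complex.I • fromBlocks (vecMulVec (onesV (Fin n)) (onesV (Fin m))) 0 (K11 m n t) 0

/-- The `k×k` flip (anti-diagonal) matrix. -/
def flipU (k : ℕ) : Matrix (Fin k) (Fin k) ℂ :=
  Matrix.of fun p q => if (p : ℕ) + (q : ℕ) + 1 = k then 1 else 0

/-- `U_{2k}`, the `2k×2k` flip matrix on the sum type. -/
def U2 (k : ℕ) : Matrix (Fin k ⊕ Fin k) (Fin k ⊕ Fin k) ℂ :=
  fromBlocks 0 (flipU k) (flipU k) 0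

/-- `J_{2k} = diag{I_k, −I_k}`. -/
def J2 (k : ℕ) : Matrix (Fin k ⊕ Fin k) (Fin k ⊕ Fin k) ℂ :=
  fromBlocks 1 0 0 (-1)

/-- `U = U_{mn}`, the `mn×mn` flip matrix (global index `m·p + j`). -/
def UmnM (m n : ℕ) : Matrix (Fin n × Fin m) (Fin n × Fin m) ℂ :=
  Matrix.of fun r c =>
    if m * (r.1 : ℕ) + (r.2 : ℕ) + (m * (c.1 : ℕ) + (c.2 : ℕ)) + 1 = m * n then 1 else 0

/-- `ψ(λ) = (λ + i/2)/(λ − i/2)`. -/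
def psiM (l : ℂ) : ℂ := (l + Complex.I / 2) / (l - Complex.I / 2)

/-- `h(y_1, y_2)`, entry `y_1^{p−1} y_2^{j−1}`. -/
def hVec (m n : ℕ) (y1 y2 : ℂ) : (Fin n × Fin m) → ℂ :=
  fun r => y1 ^ (r.1 : ℕ) * y2 ^ (r.2 : ℕ)

/-- `ω(λ,μ) = 𝟏^*(A_1^*−μ_1)^{-1}(A_2^*−μ_2)^{-1}T^{-1}(A_2−λ_2)^{-1}(A_1−λ_1)^{-1}𝟏`. -/
def omegaF (m n : ℕ) (t : ℤ → ℤ → ℂ) (l1 l2 u1 u2 : ℂ) : ℂ :=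
  star (onesV (Fin n × Fin m)) ⬝ᵥ
    ((((A1 m n)ᴴ - u1 • 1)⁻¹ * ((A2 m n)ᴴ - u2 • 1)⁻¹ * (TBT m n t)⁻¹ *
      (A2 m n - l2 • 1)⁻¹ * (A1 m n - l1 • 1)⁻¹) *ᵥ onesV (Fin n × Fin m))

/-- `ρ(y,z) = h(conj z_1, conj z_2)^* T^{-1} h(y_1,y_2)`. -/
def rhoF (m n : ℕ) (t : ℤ → ℤ → ℂ) (y1 y2 z1 z2 : ℂ) : ℂ :=
  star (hVec m n ((starRingEnd ℂ) z1) ((starRingEnd ℂ) z2)) ⬝ᵥ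
    ((TBT m n t)⁻¹ *ᵥ hVec m n y1 y2)

/-- `Γ_1 = T^{-1}Π_1`. -/
def Gam1 (m n : ℕ) (t : ℤ → ℤ → ℂ) : Matrix (Fin n × Fin m) (Fin m ⊕ Fin m) ℂ :=
  (TBT m n t)⁻¹ * Pi1 m n t

/-- `Γ_2 = T^{-1}Π_2`. -/
def Gam2 (m n : ℕ) (t : ℤ → ℤ → ℂ) : Matrix (Fin n × Fin m) (Fin n ⊕ Fin n) ℂ :=
  (TBT m n t)⁻¹ * Pi2 m n t

/-- `Γ̂_1 = Π̂_1 T^{-1}`. -/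
def GamHat1 (m n : ℕ) (t : ℤ → ℤ → ℂ) : Matrix (Fin m ⊕ Fin m) (Fin n × Fin m) ℂ :=
  PiHat1 m n t * (TBT m n t)⁻¹

/-- `Γ̂_2 = Π̂_2 T^{-1}`. -/
def GamHat2 (m n : ℕ) (t : ℤ → ℤ → ℂ) : Matrix (Fin n ⊕ Fin n) (Fin n × Fin m) ℂ :=
  PiHat2 m n t * (TBT m n t)⁻¹

/-- `Γ = [Γ_1 Γ_2]`. -/
def GammaFull (m n : ℕ) (t : ℤ → ℤ → ℂ) :
    Matrix (Fin n × Fin m) ((Fin m ⊕ Fin m) ⊕ (Fin n ⊕ Fin n)) ℂ :=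
  fromCols (Gam1 m n t) (Gam2 m n t)

/-- `Γ̂ = col[Γ̂_1; Γ̂_2]`. -/
def GammaHatFull (m n : ℕ) (t : ℤ → ℤ → ℂ) :
    Matrix ((Fin m ⊕ Fin m) ⊕ (Fin n ⊕ Fin n)) (Fin n × Fin m) ℂ :=
  fromRows (GamHat1 m n t) (GamHat2 m n t)

/-- The row vector `u(μ)`. -/
def uRow (m n : ℕ) (t : ℤ → ℤ → ℂ) (u1 u2 : ℂ) :
    ((Fin m ⊕ Fin m) ⊕ (Fin n ⊕ Fin n)) → ℂ :=
  star (onesV (Fin n × Fin m)) ᵥ*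
      (((A1 m n)ᴴ - u1 • 1)⁻¹ * ((A2 m n)ᴴ - u2 • 1)⁻¹ * GammaFull m n t)
    - Complex.I • Sum.elim
        (Sum.elim (star (onesV (Fin m)) ᵥ* ((calA2 m)ᴴ - u2 • 1)⁻¹) (0 : Fin m → ℂ))
        (Sum.elim (star (onesV (Fin n)) ᵥ* ((calA1 n)ᴴ - u1 • 1)⁻¹) (0 : Fin n → ℂ))

/-- The column vector `û(λ)`. -/
def uHatCol (m n : ℕ) (t : ℤ → ℤ → ℂ) (l1 l2 : ℂ) :
    ((Fin m ⊕ Fin m) ⊕ (Fin n ⊕ Fin n)) → ℂ :=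
  (GammaHatFull m n t * (A2 m n - l2 • 1)⁻¹ * (A1 m n - l1 • 1)⁻¹) *ᵥ onesV (Fin n × Fin m)
    + Complex.I • Sum.elim
        (Sum.elim (0 : Fin m → ℂ) ((calA2 m - l2 • 1)⁻¹ *ᵥ onesV (Fin m)))
        (Sum.elim (0 : Fin n → ℂ) ((calA1 n - l1 • 1)⁻¹ *ᵥ onesV (Fin n)))

/-- `P_1 = diag{I_{2m}, 0}`. -/
def P1M (m n : ℕ) :
    Matrix ((Fin m ⊕ Fin m) ⊕ (Fin n ⊕ Fin n)) ((Fin m ⊕ Fin m) ⊕ (Fin n ⊕ Fin n)) ℂ :=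
  fromBlocks 1 0 0 0

/-- `P_2 = I − P_1`. -/
def P2M (m n : ℕ) :
    Matrix ((Fin m ⊕ Fin m) ⊕ (Fin n ⊕ Fin n)) ((Fin m ⊕ Fin m) ⊕ (Fin n ⊕ Fin n)) ℂ :=
  1 - P1M m n

/-- `G(λ)`, built from `g_{12}` and `g_{21}`. -/
def GMat (m n : ℕ) (g12 : Matrix (Fin m ⊕ Fin m) (Fin n ⊕ Fin n) ℂ)
    (g21 : Matrix (Fin n ⊕ Fin n) (Fin m ⊕ Fin m) ℂ) (l1 l2 : ℂ) :
    Matrix ((Fin m ⊕ Fin m) ⊕ (Fin n ⊕ Fin n)) ((Fin m ⊕ Fin m) ⊕ (Fin n ⊕ Fin n)) ℂ :=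
  fromBlocks (fromBlocks (calA2 m - l2 • 1) 0 0 (calA2 m - l2 • 1)) g12
             g21 (fromBlocks (calA1 n - l1 • 1) 0 0 (calA1 n - l1 • 1))

/-- `G` as a matrix over the polynomial ring `ℂ[λ_1, λ_2]` (variables `X 0 = λ_1`, `X 1 = λ_2`). -/
def GPoly (m n : ℕ) (g12 : Matrix (Fin m ⊕ Fin m) (Fin n ⊕ Fin n) ℂ)
    (g21 : Matrix (Fin n ⊕ Fin n) (Fin m ⊕ Fin m) ℂ) :
    Matrix ((Fin m ⊕ Fin m) ⊕ (Fin n ⊕ Fin n)) ((Fin m ⊕ Fin m) ⊕ (Fin n ⊕ Fin n))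
      (MvPolynomial (Fin 2) ℂ) :=
  fromBlocks
    (fromBlocks ((calA2 m).map MvPolynomial.C - (MvPolynomial.X 1 : MvPolynomial (Fin 2) ℂ) • 1) 0 0
      ((calA2 m).map MvPolynomial.C - (MvPolynomial.X 1 : MvPolynomial (Fin 2) ℂ) • 1))
    (g12.map MvPolynomial.C)
    (g21.map MvPolynomial.C)
    (fromBlocks ((calA1 n).map MvPolynomial.C - (MvPolynomial.X 0 : MvPolynomial (Fin 2) ℂ) • 1) 0 0
      ((calA1 n).map MvPolynomial.C - (MvPolynomial.X 0 : MvPolynomial (Fin 2) ℂ) • 1))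

/-- The vector `col[0_m; 𝟏_m; 0_n; 𝟏_n]`. -/
def eVec (m n : ℕ) : ((Fin m ⊕ Fin m) ⊕ (Fin n ⊕ Fin n)) → ℂ :=
  Sum.elim (Sum.elim (0 : Fin m → ℂ) (onesV (Fin m))) (Sum.elim (0 : Fin n → ℂ) (onesV (Fin n)))

/-- `diag{J_{2m}U_{2m}, J_{2n}U_{2n}}`. -/
def DJU (m n : ℕ) :
    Matrix ((Fin m ⊕ Fin m) ⊕ (Fin n ⊕ Fin n)) ((Fin m ⊕ Fin m) ⊕ (Fin n ⊕ Fin n)) ℂ :=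
  fromBlocks (J2 m * U2 m) 0 0 (J2 n * U2 n)

/-- The block column `col[I_m; I_m; …; I_m]`. -/
def EcolId (m n : ℕ) : Matrix (Fin n × Fin m) (Fin m) ℂ :=
  Matrix.of fun r l => if r.2 = l then 1 else 0

lemma deltaL (m : ℕ) (j : ℕ) (hj : j + 1 < m) (v : Fin m → ℂ) :
    (∑ x : Fin m, aC ((j:ℤ) + 1 - ((x:ℕ):ℤ)) * v x)
      - (∑ x : Fin m, aC ((j:ℤ) - ((x:ℕ):ℤ)) * v x)
      = Complex.I / 2 * (v ⟨j, by omega⟩ + v ⟨j+1, hj⟩) := by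
  rw [← Finset.sum_sub_distrib]
  have key : ∀ x : Fin m, aC ((j:ℤ)+1 - ((x:ℕ):ℤ)) * v x - aC ((j:ℤ) - ((x:ℕ):ℤ)) * v x
      = ((if x = (⟨j, by omega⟩ : Fin m) then Complex.I/2 else 0)
        + (if x = (⟨j+1, hj⟩ : Fin m) then Complex.I/2 else 0)) * v x := by
    intro x
    have hx : aC ((j:ℤ)+1 - ((x:ℕ):ℤ)) - aC ((j:ℤ) - ((x:ℕ):ℤ))
        = (if x = (⟨j, by omega⟩ : Fin m) then Complex.I/2 else 0)
          + (if x = (⟨j+1, hj⟩ : Fin m) then Complex.I/2 else 0) := by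
      simp only [aC, Fin.ext_iff]
      split_ifs <;> first | ring1 | (exfalso; omega)
    rw [← sub_mul, hx]
  rw [Finset.sum_congr rfl fun x _ => key x]
  simp [add_mul, ite_mul, Finset.sum_add_distrib, Finset.sum_ite_eq']
  ring

lemma deltaR (m : ℕ) (l : ℕ) (hl : l + 1 < m) (w : Fin m → ℂ) :
    (∑ x : Fin m, w x * (starRingEnd ℂ) (aC ((l:ℤ) + 1 - ((x:ℕ):ℤ))))
      - (∑ x : Fin m, w x * (starRingEnd ℂ) (aC ((l:ℤ) - ((x:ℕ):ℤ))))
      = -(Complex.I / 2) * (w ⟨l, by omega⟩ + w ⟨l+1, hl⟩) := by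
  rw [← Finset.sum_sub_distrib]
  have key : ∀ x : Fin m,
      w x * (starRingEnd ℂ) (aC ((l:ℤ)+1 - ((x:ℕ):ℤ)))
        - w x * (starRingEnd ℂ) (aC ((l:ℤ) - ((x:ℕ):ℤ)))
      = w x * ((if x = (⟨l, by omega⟩ : Fin m) then -(Complex.I/2) else 0)
        + (if x = (⟨l+1, hl⟩ : Fin m) then -(Complex.I/2) else 0)) := by
    intro x
    have hx : (starRingEnd ℂ) (aC ((l:ℤ)+1 - ((x:ℕ):ℤ)))
        - (starRingEnd ℂ) (aC ((l:ℤ) - ((x:ℕ):ℤ)))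
        = (if x = (⟨l, by omega⟩ : Fin m) then -(Complex.I/2) else 0)
          + (if x = (⟨l+1, hl⟩ : Fin m) then -(Complex.I/2) else 0) := by
      simp only [aC, Fin.ext_iff, apply_ite (starRingEnd ℂ), map_div₀, Complex.conj_I,
        map_zero, map_ofNat]
      split_ifs <;> first | ring1 | (exfalso; omega)
    rw [← mul_sub, hx]
  rw [Finset.sum_congr rfl fun x _ => key x]
  simp [mul_add, mul_ite, Finset.sum_add_distrib, Finset.sum_ite_eq']
  ring

/-- final step of Theorem 3.3, p = 2: the identity with `M_{22}`, `M_{32}`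
forces the blocks of `T` to be Toeplitz. -/
theorem toeplitz_blocks_from_identity (m n : ℕ) (hm : 0 < m) (hn : 0 < n)
    (T : Matrix (Fin n × Fin m) (Fin n × Fin m) ℂ)
    (M : Matrix (Fin n × Fin m) (Fin n) ℂ) (N : Matrix (Fin n) (Fin n × Fin m) ℂ)
    (h : A2 m n * T - T * (A2 m n)ᴴ = Complex.I • (M * M22 m n + M32 m n * N)) :
    ∀ p q : Fin n, ∀ j l j' l' : Fin m,
      ((j : ℕ) : ℤ) - ((l : ℕ) : ℤ) = ((j' : ℕ) : ℤ) - ((l' : ℕ) : ℤ) →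
      T (p, j) (q, l) = T (p, j') (q, l') := by
  intro p q j l j' l' hdiff
  have E : ∀ a b : Fin m,
      (∑ x : Fin m, aC (((a:ℕ):ℤ) - ((x:ℕ):ℤ)) * T (p, x) (q, b))
        - (∑ x : Fin m, T (p, a) (q, x) * (starRingEnd ℂ) (aC (((b:ℕ):ℤ) - ((x:ℕ):ℤ))))
      = Complex.I * (M (p, a) q + N p (q, b)) := by
    intro a b
    have h' := congrFun (congrFun h (p, a)) (q, b)
    simp only [Matrix.sub_apply, Matrix.smul_apply, Matrix.add_apply, Matrix.mul_apply,
      Matrix.conjTranspose_apply, A2, M22, M32, Matrix.of_apply, smul_eq_mul,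
      Fintype.sum_prod_type, ite_mul, mul_ite, zero_mul, mul_zero, mul_one,
      Finset.sum_ite_irrel, Finset.sum_const_zero, Finset.sum_ite_eq, Finset.sum_ite_eq',
      Finset.mem_univ, if_true, apply_ite (star : ℂ → ℂ), star_zero, star_one, one_mul] at h'
    exact h'
  have step : ∀ (a b : ℕ) (ha : a + 1 < m) (hb : b + 1 < m)
      (ha' : a < m) (hb' : b < m),
      T (p, ⟨a+1, ha⟩) (q, ⟨b+1, hb⟩) = T (p, ⟨a, ha'⟩) (q, ⟨b, hb'⟩) := by
    intro a b ha hb ha' hb'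
    have Ea := E ⟨a+1, ha⟩ ⟨b+1, hb⟩
    have Eb := E ⟨a+1, ha⟩ ⟨b, hb'⟩
    have Ec := E ⟨a, ha'⟩ ⟨b+1, hb⟩
    have Ed := E ⟨a, ha'⟩ ⟨b, hb'⟩
    have D1 := deltaL m a ha (fun x => T (p, x) (q, ⟨b+1, hb⟩))
    have D2 := deltaL m a ha (fun x => T (p, x) (q, ⟨b, hb'⟩))
    have D3 := deltaR m b hb (fun x => T (p, ⟨a+1, ha⟩) (q, x))
    have D4 := deltaR m b hb (fun x => T (p, ⟨a, ha'⟩) (q, x))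
    beta_reduce at D1 D2 D3 D4
    push_cast at Ea Eb Ec Ed
    have key : Complex.I * (T (p, ⟨a+1, ha⟩) (q, ⟨b+1, hb⟩) - T (p, ⟨a, ha'⟩) (q, ⟨b, hb'⟩)) = 0 := by
      linear_combination Ea - Eb - Ec + Ed - D1 + D2 + D3 - D4
    rcases mul_eq_zero.mp key with hk | hk
    · exact absurd hk Complex.I_ne_zero
    · exact sub_eq_zero.mp hk
  have shift : ∀ (k a b : ℕ) (ha : a + k < m) (hb : b + k < m)
      (ha' : a < m) (hb' : b < m),
      T (p, ⟨a+k, ha⟩) (q, ⟨b+k, hb⟩) = T (p, ⟨a, ha'⟩) (q, ⟨b, hb'⟩) := by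
    intro k
    induction k with
    | zero => intro a b _ _ _ _; rfl
    | succ k ih =>
      intro a b ha hb ha' hb'
      have h1 : a + (k+1) = (a + k) + 1 := by omega
      have h2 : b + (k+1) = (b + k) + 1 := by omega
      have e1 : (⟨a + (k+1), ha⟩ : Fin m) = ⟨(a+k)+1, by omega⟩ := by simp [Fin.ext_iff, h1]
      have e2 : (⟨b + (k+1), hb⟩ : Fin m) = ⟨(b+k)+1, by omega⟩ := by simp [Fin.ext_iff, h2]
      rw [e1, e2, step (a+k) (b+k) (by omega) (by omega) (by omega) (by omega)]
      exact ih a b (by omega) (by omega) ha' hb'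
  rcases le_total (j:ℕ) (j':ℕ) with hle | hle
  · set k := (j':ℕ) - (j:ℕ) with hk
    have hj' : (j':ℕ) = (j:ℕ) + k := by omega
    have hl' : (l':ℕ) = (l:ℕ) + k := by omega
    have := shift k j l (hj' ▸ j'.isLt) (hl' ▸ l'.isLt) j.isLt l.isLt
    have e1 : (⟨(j:ℕ)+k, hj' ▸ j'.isLt⟩ : Fin m) = j' := by simp [Fin.ext_iff]; omega
    have e2 : (⟨(l:ℕ)+k, hl' ▸ l'.isLt⟩ : Fin m) = l' := by simp [Fin.ext_iff]; omega
    have e3 : (⟨(j:ℕ), j.isLt⟩ : Fin m) = j := by simp [Fin.ext_iff]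
    have e4 : (⟨(l:ℕ), l.isLt⟩ : Fin m) = l := by simp [Fin.ext_iff]
    rw [e1, e2, e3, e4] at this
    exact this.symm
  · set k := (j:ℕ) - (j':ℕ) with hk
    have hj' : (j:ℕ) = (j':ℕ) + k := by omega
    have hl' : (l:ℕ) = (l':ℕ) + k := by omega
    have := shift k j' l' (hj' ▸ j.isLt) (hl' ▸ l.isLt) j'.isLt l'.isLt
    have e1 : (⟨(j':ℕ)+k, hj' ▸ j.isLt⟩ : Fin m) = j := by simp [Fin.ext_iff]; omega
    have e2 : (⟨(l':ℕ)+k, hl' ▸ l.isLt⟩ : Fin m) = l := by simp [Fin.ext_iff]; omega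
    have e3 : (⟨(j':ℕ), j'.isLt⟩ : Fin m) = j' := by simp [Fin.ext_iff]
    have e4 : (⟨(l':ℕ), l'.isLt⟩ : Fin m) = l' := by simp [Fin.ext_iff]
    rw [e1, e2, e3, e4] at this
    exact this


end
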